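/- Let S ⊆ ℕ_0^d be a generalized numerical semigroup. Then S is pseudo-symmetric if and only if S is almost symmetric and t(S) = 2. -/

import Mathlib

open scoped BigOperators

/-- A generalized numerical semigroup: a submonoid of `ℕ^d` with finite complement. -/
def IsGNS {d : ℕ} (S : Set (Fin d → ℕ)) : Prop :=
  (0 : Fin d → ℕ) ∈ S ∧ (∀ x y : Fin d → ℕ, x ∈ S → y ∈ S → x + y ∈ S) ∧ Sᶜ.Finite

/-- The genus: number of gaps. -/
noncomputable def genus {d : ℕ} (S : Set (Fin d → ℕ)) : ℕ := Sᶜ.ncard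

/-- Pseudo-Frobenius elements. -/
def PF {d : ℕ} (S : Set (Fin d → ℕ)) : Set (Fin d → ℕ) :=
  {h | h ∉ S ∧ ∀ s ∈ S, s ≠ 0 → h + s ∈ S}

/-- The type: number of pseudo-Frobenius elements. -/
noncomputable def typ {d : ℕ} (S : Set (Fin d → ℕ)) : ℕ := (PF S).ncard

/-- Maximal elements of a set with respect to a relation. -/
def Maximals {α : Type*} (le : α → α → Prop) (X : Set α) : Set α :=
  {x ∈ X | ∀ y ∈ X, le x y → x = y}

/-- `f` is the unique maximal element of the set of gaps w.r.t. the componentwise order. -/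
def IsFrobenius {d : ℕ} (S : Set (Fin d → ℕ)) (f : Fin d → ℕ) : Prop :=
  Maximals (· ≤ ·) Sᶜ = {f}

/-- Almost symmetric: `2 g(S) + 1 - t(S) = ∏ (h i + 1)` for some gap `h`. -/
def AlmostSymmetric {d : ℕ} (S : Set (Fin d → ℕ)) : Prop :=
  ∃ h ∉ S, 2 * genus S + 1 = typ S + ∏ i, (h i + 1)

/-- Special gaps. -/
def SG {d : ℕ} (S : Set (Fin d → ℕ)) : Set (Fin d → ℕ) :=
  {h ∈ PF S | h + h ∈ S}

/-- The partial order `≤_S` : `y ≤_S x` iff `x - y ∈ S`. -/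
def leS {d : ℕ} (S : Set (Fin d → ℕ)) (x y : Fin d → ℕ) : Prop :=
  ∃ s ∈ S, x + s = y

/-- The Apéry set of `S` with respect to `n`. -/
def Ap {d : ℕ} (S : Set (Fin d → ℕ)) (n : Fin d → ℕ) : Set (Fin d → ℕ) :=
  {s ∈ S | ¬ ∃ u ∈ S, u + n = s}

/-- The reduced Apéry set of `S` with respect to `n`. -/
def Cred {d : ℕ} (S : Set (Fin d → ℕ)) (n : Fin d → ℕ) : Set (Fin d → ℕ) :=
  {s ∈ Ap S n | ∃ h, h ∉ S ∧ s ≤ h + n}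

/-- A monomial order on `ℕ^d` given by its strict-order relation. -/
def IsMonomialOrder (d : ℕ) (lt : (Fin d → ℕ) → (Fin d → ℕ) → Prop) : Prop :=
  (∀ a, ¬ lt a a) ∧ (∀ a b c, lt a b → lt b c → lt a c) ∧
  (∀ a b, a ≠ b → lt a b ∨ lt b a) ∧
  (∀ u a b, lt a b → lt (a + u) (b + u)) ∧
  (∀ a, a ≠ (0 : Fin d → ℕ) → lt 0 a)

/-- Minimal generator of a GNS. -/
def IsMinGen {d : ℕ} (S : Set (Fin d → ℕ)) (x : Fin d → ℕ) : Prop :=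
  x ∈ S ∧ x ≠ 0 ∧ ∀ y ∈ S, ∀ z ∈ S, y ≠ 0 → z ≠ 0 → y + z ≠ x

/-- Irreducible GNS: not an intersection of two GNSs properly containing it. -/
def GNSIrreducible {d : ℕ} (S : Set (Fin d → ℕ)) : Prop :=
  ¬ ∃ S₁ S₂ : Set (Fin d → ℕ), IsGNS S₁ ∧ IsGNS S₂ ∧ S ⊂ S₁ ∧ S ⊂ S₂ ∧ S = S₁ ∩ S₂

/-- Pseudo-symmetric: `PF S = {f, f/2}`. -/
def PseudoSymmetric {d : ℕ} (S : Set (Fin d → ℕ)) : Prop :=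
  ∃ f q : Fin d → ℕ, f ≠ q ∧ q + q = f ∧ PF S = {f, q}

namespace Statement9Aux

variable {d : ℕ} {S : Set (Fin d → ℕ)}

/-- Every gap has a pseudo-Frobenius element above it (in the `≤_S` sense). -/
lemma exists_PF_above (hS : IsGNS S) {x : Fin d → ℕ} (hx : x ∉ S) :
    ∃ p ∈ PF S, ∃ s ∈ S, x + s = p := by
  obtain ⟨h0, hadd, hfin⟩ := hS
  have hTfin : {y : Fin d → ℕ | y ∉ S ∧ ∃ s ∈ S, x + s = y}.Finite :=
    hfin.subset (fun y hy => hy.1)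
  have hTne : {y : Fin d → ℕ | y ∉ S ∧ ∃ s ∈ S, x + s = y}.Nonempty :=
    ⟨x, hx, 0, h0, by simp⟩
  obtain ⟨m, hmT, hmax⟩ := hTfin.exists_maximal hTne
  obtain ⟨hmS, s, hsS, hxs⟩ := hmT
  refine ⟨m, ⟨hmS, fun s' hs' hs'0 => ?_⟩, s, hsS, hxs⟩
  by_contra hms
  have hmem : m + s' ∈ {y : Fin d → ℕ | y ∉ S ∧ ∃ s ∈ S, x + s = y} :=
    ⟨hms, s + s', hadd _ _ hsS hs', by rw [← add_assoc, hxs]⟩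
  have := le_antisymm le_self_add (hmax hmem le_self_add)
  exact hs'0 (left_eq_add.mp this)

lemma card_Iic (h : Fin d → ℕ) : (Set.Iic h).ncard = ∏ i, (h i + 1) := by
  have e1 : Set.Iic h = Set.univ.pi (fun i => Set.Iic (h i)) := by
    ext x; simp [Set.mem_pi, Pi.le_def]
  rw [e1, ← Nat.card_coe_set_eq, Nat.card_congr (Equiv.Set.univPi _), Nat.card_pi]
  congr 1; ext i
  rw [Nat.card_coe_set_eq, Set.ncard_eq_toFinset_card', Set.toFinset_Iic, Nat.card_Iic]

/-- The key counting identity at an arbitrary gap `h`. -/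
lemma counting (hS : IsGNS S) {h : Fin d → ℕ} (hh : h ∉ S) :
    2 * genus S + 1 =
      {x | x ∉ S ∧ x ≤ h ∧ h - x ∉ S}.ncard + 2 * (Sᶜ \ Set.Iic h).ncard + 1
        + ∏ i, (h i + 1) := by
  have hfin := hS.2.2
  have hBfin : (Set.Iic h).Finite := Set.finite_Iic h
  set A := Sᶜ ∩ Set.Iic h with hA
  set C := S ∩ Set.Iic h with hC
  set AH := {x : Fin d → ℕ | x ∉ S ∧ x ≤ h ∧ h - x ∉ S} with hAHdef
  set G := Sᶜ \ Set.Iic h with hG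
  have hAfin : A.Finite := hfin.inter_of_left _
  have hCfin : C.Finite := hBfin.inter_of_right _
  have hGfin : G.Finite := hfin.diff
  have hAHsub : AH ⊆ A := fun x hx => ⟨hx.1, hx.2.1⟩
  have e1 : genus S = A.ncard + G.ncard := by
    have hu : A ∪ G = Sᶜ := Set.inter_union_diff _ _
    have hd : Disjoint A G := Set.disjoint_left.mpr fun x hx hx' => hx'.2 hx.2
    rw [genus, ← hu, Set.ncard_union_eq hd hAfin hGfin]
  have e2 : (Set.Iic h).ncard = A.ncard + C.ncard := by
    have hu : A ∪ C = Set.Iic h := by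
      ext x
      constructor
      · rintro (⟨_, hx⟩ | ⟨_, hx⟩) <;> exact hx
      · intro hx
        by_cases hxS : x ∈ S
        · exact Or.inr ⟨hxS, hx⟩
        · exact Or.inl ⟨hxS, hx⟩
    have hd : Disjoint A C := Set.disjoint_left.mpr fun x hx hx' => hx.1 hx'.1
    rw [← hu, Set.ncard_union_eq hd hAfin hCfin]
  have himg : (fun x => h - x) '' C = A \ AH := by
    ext y
    constructor
    · rintro ⟨x, ⟨hxS, hxh⟩, rfl⟩
      have hxle : x ≤ h := hxh
      have hc1 : h - x ∉ S := by
        intro hmem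
        have hx' : x + (h - x) = h := add_tsub_cancel_of_le hxle
        exact hh (hx' ▸ hS.2.1 _ _ hxS hmem)
      refine ⟨⟨hc1, Set.mem_Iic.mpr tsub_le_self⟩, fun hmem => ?_⟩
      exact hmem.2.2 (by rw [tsub_tsub_cancel_of_le hxle]; exact hxS)
    · rintro ⟨⟨hyS, hyh⟩, hyAH⟩
      have hyle : y ≤ h := hyh
      have hhy : h - y ∈ S := by
        by_contra hc
        exact hyAH ⟨hyS, hyle, hc⟩
      exact ⟨h - y, ⟨hhy, Set.mem_Iic.mpr tsub_le_self⟩, tsub_tsub_cancel_of_le hyle⟩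
  have hinj : Set.InjOn (fun x => h - x) C := by
    intro x hx y hy hxy
    have hx' : (x : Fin d → ℕ) ≤ h := hx.2
    have hy' : (y : Fin d → ℕ) ≤ h := hy.2
    have : h - (h - x) = h - (h - y) := by simp only at hxy; rw [hxy]
    rwa [tsub_tsub_cancel_of_le hx', tsub_tsub_cancel_of_le hy'] at this
  have e3a : C.ncard = (A \ AH).ncard := by
    rw [← himg, Set.ncard_image_of_injOn hinj]
  have e3 : (A \ AH).ncard + AH.ncard = A.ncard :=
    Set.ncard_diff_add_ncard_of_subset hAHsub hAfin
  have eN : (Set.Iic h).ncard = ∏ i, (h i + 1) := card_Iic h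
  omega

end Statement9Aux

/-- A GNS is pseudo-symmetric iff it is almost symmetric of type 2. -/
theorem statement9 (d : ℕ) (hd : 0 < d) (S : Set (Fin d → ℕ)) (hS : IsGNS S) :
    PseudoSymmetric S ↔ AlmostSymmetric S ∧ typ S = 2 := by
  open Statement9Aux in
  constructor
  · rintro ⟨f, q, hfq, hqq, hPF⟩
    have hfPF : f ∈ PF S := by rw [hPF]; exact Set.mem_insert _ _
    have hqPF : q ∈ PF S := by rw [hPF]; exact Set.mem_insert_of_mem _ rfl
    have hfS : f ∉ S := hfPF.1
    have hqS : q ∉ S := hqPF.1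
    have hqf : q ≤ f := hqq ▸ le_self_add
    have htyp : typ S = 2 := by rw [typ, hPF]; exact Set.ncard_pair hfq
    have hgaps : ∀ x, x ∉ S → x ≤ f := by
      intro x hx
      obtain ⟨p, hp, s, hsS, hxs⟩ := exists_PF_above hS hx
      have hxp : x ≤ p := hxs ▸ le_self_add
      rw [hPF] at hp
      simp only [Set.mem_insert_iff, Set.mem_singleton_iff] at hp
      rcases hp with hpf | hpq
      · exact hpf ▸ hxp
      · exact (hpq ▸ hxp).trans hqf
    have hAH : {x | x ∉ S ∧ x ≤ f ∧ f - x ∉ S} = {q} := by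
      ext x
      simp only [Set.mem_setOf_eq, Set.mem_singleton_iff]
      constructor
      · rintro ⟨hxS, hxf, hfxS⟩
        obtain ⟨p, hp, s, hsS, hps⟩ := exists_PF_above hS hfxS
        rw [hPF] at hp
        simp only [Set.mem_insert_iff, Set.mem_singleton_iff] at hp
        rcases hp with hpf | hpq
        · exfalso
          rw [hpf] at hps
          have h1 : f - x + x = f - x + s := by
            rw [hps, tsub_add_cancel_of_le hxf]
          have hsx : s = x := (add_left_cancel h1).symm
          exact hxS (hsx ▸ hsS)
        · rw [hpq] at hps
          obtain ⟨p', hp', s', hs'S, hp's⟩ := exists_PF_above hS hxS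
          rw [hPF] at hp'
          simp only [Set.mem_insert_iff, Set.mem_singleton_iff] at hp'
          rcases hp' with hp'f | hp'q
          · exfalso
            rw [hp'f] at hp's
            have h1 : x + (f - x) = x + s' := by
              rw [hp's, add_tsub_cancel_of_le hxf]
            have hs' : s' = f - x := (add_left_cancel h1).symm
            exact hfxS (hs' ▸ hs'S)
          · rw [hp'q] at hp's
            have h1 : x + (f - x) = f := add_tsub_cancel_of_le hxf
            have h2 : f + (s' + s) = f := by
              calc f + (s' + s) = (x + (f - x)) + (s' + s) := by rw [h1]
                _ = (x + s') + (f - x + s) := by ring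
                _ = q + q := by rw [hp's, hps]
                _ = f := hqq
            have h3 : s' + s = 0 := left_eq_add.mp h2.symm
            have h4 : s' = 0 := (add_eq_zero.mp h3).1
            have h5 := hp's
            rw [h4, add_zero] at h5
            exact h5
      · intro hxq
        rw [hxq]
        refine ⟨hqS, hqf, ?_⟩
        have hfmq : f - q = q := by rw [← hqq, add_tsub_cancel_left]
        rw [hfmq]; exact hqS
    have hGe : Sᶜ \ Set.Iic f = ∅ := by
      rw [Set.eq_empty_iff_forall_notMem]
      rintro x ⟨hx, hx2⟩
      exact hx2 (Set.mem_Iic.mpr (hgaps x hx))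
    refine ⟨⟨f, hfS, ?_⟩, htyp⟩
    have hc := counting hS hfS
    rw [hAH, hGe, Set.ncard_singleton, Set.ncard_empty] at hc
    rw [htyp]
    omega
  · rintro ⟨⟨h, hhS, heq⟩, htyp⟩
    have hcount := counting hS hhS
    have key : {x | x ∉ S ∧ x ≤ h ∧ h - x ∉ S}.ncard + 2 * (Sᶜ \ Set.Iic h).ncard = 1 := by
      omega
    have hG0 : (Sᶜ \ Set.Iic h).ncard = 0 := by omega
    have hAH1 : {x | x ∉ S ∧ x ≤ h ∧ h - x ∉ S}.ncard = 1 := by omega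
    have hGfin : (Sᶜ \ Set.Iic h).Finite := hS.2.2.diff
    have hGe : Sᶜ \ Set.Iic h = ∅ := (Set.ncard_eq_zero hGfin).mp hG0
    have hgaps : ∀ x, x ∉ S → x ≤ h := by
      intro x hx
      by_contra hc
      have hmem : x ∈ Sᶜ \ Set.Iic h := ⟨hx, fun hle => hc (Set.mem_Iic.mp hle)⟩
      rw [hGe] at hmem
      exact hmem
    obtain ⟨q, hq⟩ := Set.ncard_eq_one.mp hAH1
    have hqmem : q ∈ {x | x ∉ S ∧ x ≤ h ∧ h - x ∉ S} := by rw [hq]; rfl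
    obtain ⟨hqS, hqh, hhqS⟩ := hqmem
    have hhqmem : h - q ∈ {x | x ∉ S ∧ x ≤ h ∧ h - x ∉ S} := by
      refine ⟨hhqS, tsub_le_self, ?_⟩
      rw [tsub_tsub_cancel_of_le hqh]
      exact hqS
    rw [hq, Set.mem_singleton_iff] at hhqmem
    have hqq : q + q = h := by
      have h1 : q + (h - q) = h := add_tsub_cancel_of_le hqh
      rwa [hhqmem] at h1
    have hhne : h ≠ q := by
      intro hhq
      have hq0 : q = 0 := left_eq_add.mp (hqq.trans hhq).symm
      exact hqS (hq0 ▸ hS.1)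
    have hhPF : h ∈ PF S := by
      refine ⟨hhS, fun s hs hs0 => ?_⟩
      by_contra hc
      have h1 : h + s ≤ h := hgaps _ hc
      have h2 : h + s = h := le_antisymm h1 le_self_add
      exact hs0 (left_eq_add.mp h2.symm)
    have hqPF : q ∈ PF S := by
      refine ⟨hqS, fun s hs hs0 => ?_⟩
      by_contra hc
      have hqsh : q + s ≤ h := hgaps _ hc
      have hsq : s ≤ q := by
        have h1 : q + s ≤ q + q := hqq ▸ hqsh
        exact le_of_add_le_add_left h1
      have hmem : q + s ∈ {x | x ∉ S ∧ x ≤ h ∧ h - x ∉ S} := by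
        refine ⟨hc, hqsh, ?_⟩
        have e : h - (q + s) = q - s := by rw [← hqq, add_tsub_add_eq_tsub_left]
        rw [e]
        intro hqsS
        have h1 : q - s + s = q := tsub_add_cancel_of_le hsq
        exact hqS (h1 ▸ hS.2.1 _ _ hqsS hs)
      rw [hq, Set.mem_singleton_iff] at hmem
      exact hs0 (left_eq_add.mp hmem.symm)
    have hsub : ({h, q} : Set (Fin d → ℕ)) ⊆ PF S := by
      rintro x (rfl | rfl)
      · exact hhPF
      · exact hqPF
    have hPFfin : (PF S).Finite := hS.2.2.subset (fun x hx => hx.1)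
    have hPFeq : ({h, q} : Set (Fin d → ℕ)) = PF S := by
      refine Set.eq_of_subset_of_ncard_le hsub ?_ hPFfin
      rw [Set.ncard_pair hhne]
      exact le_of_eq htyp
    exact ⟨h, q, hhne, hqq, hPFeq.symm⟩
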